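/- Let r > 1 be real, K a number field, and χ a real Dirichlet character. Let P be a finite set of nonzero prime ideals of 𝓞_K and let 𝔭 be a nonzero prime ideal not in P. Write 𝒩_Q = {I ∈ I_K : no prime in Q divides I} for a set Q of primes, and set σ_{r,K,χ}(𝔭^∞) = (1 − χ(N(𝔭))·N(𝔭)^{-r})^{-1}. Then the closure of σ_{r,K,χ}(𝒩_P) equals the union over a ∈ ℤ_{≥0} ∪ {∞} of σ_{r,K,χ}(𝔭^a) · (closure of σ_{r,K,χ}(𝒩_{P ∪ {𝔭}})). -/

import Mathlib

open NumberField
open scoped Pointwise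

/-- The twisted ideal divisor function `σ_{r,K,χ}(I) = ∑_{J ∣ I} χ(N(J)) N(J)^{-r}`. -/
noncomputable def sigmaChi (K : Type*) [Field K] [NumberField K] {m : ℕ}
    (χ : DirichletCharacter ℝ m) (r : ℝ) (I : Ideal (𝓞 K)) : ℝ :=
  ∑' J : {J : Ideal (𝓞 K) // J ∣ I},
    χ ((Ideal.absNorm (J : Ideal (𝓞 K)) : ℕ) : ZMod m) *
      (Ideal.absNorm (J : Ideal (𝓞 K)) : ℝ) ^ (-r)

/-- `σ_{r,K,χ}(𝔭^∞) = (1 − χ(N(𝔭)) N(𝔭)^{-r})⁻¹`. -/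
noncomputable def sigmaChiInf (K : Type*) [Field K] [NumberField K] {m : ℕ}
    (χ : DirichletCharacter ℝ m) (r : ℝ) (p : Ideal (𝓞 K)) : ℝ :=
  (1 - χ ((Ideal.absNorm p : ℕ) : ZMod m) * (Ideal.absNorm p : ℝ) ^ (-r))⁻¹

set_option maxHeartbeats 1000000

open NumberField
open scoped Pointwise

namespace Stmt7Aux

open UniqueFactorizationMonoid

variable {K : Type*} [Field K] [NumberField K] {m : ℕ}

/-- The summand function. -/
noncomputable def f0 (χ : DirichletCharacter ℝ m) (r : ℝ) (J : Ideal (𝓞 K)) : ℝ :=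
  χ ((Ideal.absNorm J : ℕ) : ZMod m) * (Ideal.absNorm J : ℝ) ^ (-r)

lemma f0_one (χ : DirichletCharacter ℝ m) (r : ℝ) : f0 (K := K) χ r 1 = 1 := by
  simp [f0]

lemma f0_mul (χ : DirichletCharacter ℝ m) (r : ℝ) (I J : Ideal (𝓞 K)) :
    f0 χ r (I * J) = f0 χ r I * f0 χ r J := by
  simp only [f0]
  rw [show Ideal.absNorm (I * J) = Ideal.absNorm I * Ideal.absNorm J from MonoidHom.map_mul Ideal.absNorm.toMonoidHom I J]
  push_cast
  rw [Real.mul_rpow (by positivity) (by positivity)]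
  rw [map_mul χ]; ring

lemma f0_pow (χ : DirichletCharacter ℝ m) (r : ℝ) (q : Ideal (𝓞 K)) (t : ℕ) :
    f0 χ r (q ^ t) = (f0 χ r q) ^ t := by
  induction t with
  | zero => simpa using f0_one χ r
  | succ n ih => rw [pow_succ, pow_succ, f0_mul, ih]

lemma abs_f0_le (χ : DirichletCharacter ℝ m) (hχ : ∀ a : ZMod m, χ a = -1 ∨ χ a = 0 ∨ χ a = 1)
    (r : ℝ) (J : Ideal (𝓞 K)) : |f0 χ r J| ≤ (Ideal.absNorm J : ℝ) ^ (-r) := by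
  rw [f0, abs_mul, abs_of_nonneg (by positivity : (0:ℝ) ≤ (Ideal.absNorm J : ℝ) ^ (-r))]
  have : |χ ((Ideal.absNorm J : ℕ) : ZMod m)| ≤ 1 := by
    rcases hχ ((Ideal.absNorm J : ℕ) : ZMod m) with h | h | h <;> rw [h] <;> norm_num
  calc |χ ((Ideal.absNorm J : ℕ) : ZMod m)| * (Ideal.absNorm J : ℝ) ^ (-r)
      ≤ 1 * (Ideal.absNorm J : ℝ) ^ (-r) := by
        apply mul_le_mul_of_nonneg_right this (by positivity)
    _ = _ := one_mul _


variable (χ : DirichletCharacter ℝ m) (r : ℝ)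

lemma sigmaChi_eq (I : Ideal (𝓞 K)) :
    sigmaChi K χ r I = ∑' J : {J : Ideal (𝓞 K) // J ∣ I}, f0 χ r J.1 := rfl

lemma sigmaChi_one : sigmaChi K χ r 1 = 1 := by
  have huniq : ∀ d : {J : Ideal (𝓞 K) // J ∣ 1}, d = ⟨1, dvd_rfl⟩ := by
    rintro ⟨d, hd⟩
    have : d = ⊤ := Ideal.isUnit_iff.mp (isUnit_of_dvd_one hd)
    exact Subtype.ext (this.trans Ideal.one_eq_top.symm)
  rw [sigmaChi_eq, tsum_eq_single (⟨1, dvd_rfl⟩ : {J : Ideal (𝓞 K) // J ∣ 1})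
    (fun b hb => absurd (huniq b) hb)]
  exact f0_one χ r

lemma divisors_bij {q J : Ideal (𝓞 K)} (hq : Prime q) (hJ : J ≠ 0) (hqJ : ¬ q ∣ J) (a : ℕ) :
    Function.Bijective (fun te : Fin (a+1) × {e : Ideal (𝓞 K) // e ∣ J} =>
      (⟨q ^ (te.1 : ℕ) * te.2.1,
        mul_dvd_mul (pow_dvd_pow q (Nat.lt_succ_iff.mp te.1.isLt)) te.2.2⟩ :
        {d : Ideal (𝓞 K) // d ∣ q ^ a * J})) := by
  have key : ∀ (t s : ℕ) (e e' : Ideal (𝓞 K)), e ∣ J → q ^ t * e = q ^ s * e' → t ≤ s → t = s := by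
    intro t s e e' heJ heq hts
    by_contra hne
    have hlt : t < s := lt_of_le_of_ne hts hne
    have he : e = q ^ (s - t) * e' := by
      apply mul_left_cancel₀ (pow_ne_zero t hq.ne_zero)
      rw [heq, ← mul_assoc, ← pow_add, Nat.add_sub_cancel' hlt.le]
    have : q ∣ e := he ▸ Dvd.dvd.mul_right (dvd_pow_self q (Nat.sub_ne_zero_of_lt hlt)) e'
    exact hqJ (this.trans heJ)
  constructor
  · rintro ⟨t, e, he⟩ ⟨s, e', he'⟩ h
    simp only [Subtype.mk.injEq] at h
    have hts : (t : ℕ) = (s : ℕ) := by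
      rcases le_total (t : ℕ) (s : ℕ) with hle | hle
      · exact key _ _ _ _ he h hle
      · exact (key _ _ _ _ he' h.symm hle).symm
    have he2 : e = e' := by
      apply mul_left_cancel₀ (pow_ne_zero (t : ℕ) hq.ne_zero)
      rw [h, hts]
    exact Prod.ext (Fin.ext hts) (Subtype.ext he2)
  · rintro ⟨d, hd⟩
    have hd0 : d ≠ 0 := ne_zero_of_dvd_ne_zero (mul_ne_zero (pow_ne_zero a hq.ne_zero) hJ) hd
    obtain ⟨t, e, hqe, rfl⟩ := WfDvdMonoid.max_power_factor hd0 hq.irreducible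
    have hta : t ≤ a := by
      by_contra hta
      push_neg at hta
      obtain ⟨u, hu⟩ := hd
      have : J = q ^ (t - a) * e * u := by
        apply mul_left_cancel₀ (pow_ne_zero a hq.ne_zero)
        rw [hu, ← mul_assoc, ← mul_assoc, ← pow_add, Nat.add_sub_cancel' hta.le]
      have : q ∣ J := by
        rw [this]
        exact (Dvd.dvd.mul_right (dvd_pow_self q (Nat.sub_ne_zero_of_lt hta)) e).mul_right u
      exact hqJ this
    have heJ : e ∣ J := by
      have he0 : e ≠ 0 := ne_zero_of_dvd_ne_zero hd0 (dvd_mul_left e (q ^ t))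
      apply UniqueFactorizationMonoid.dvd_of_dvd_mul_right_of_no_prime_factors he0
        (fun {x} hxe hxq hx => ?_) ((dvd_mul_left e (q ^ t)).trans hd)
      have hxq' : x ∣ q := hx.dvd_of_dvd_pow hxq
      obtain ⟨c, hc⟩ := hxq'
      rcases hq.irreducible.isUnit_or_isUnit hc with hux | huc
      · exact hx.not_unit hux
      · have hce : c = 1 := by rw [Ideal.one_eq_top]; exact Ideal.isUnit_iff.mp huc
        rw [hce, mul_one] at hc
        exact hqe (hc ▸ hxe)
    exact ⟨(⟨t, Nat.lt_succ_of_le hta⟩, ⟨e, heJ⟩), rfl⟩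

lemma sigmaChi_mul_pow {q J : Ideal (𝓞 K)} (hq : Prime q) (hJ : J ≠ 0) (hqJ : ¬ q ∣ J)
    (a : ℕ) :
    sigmaChi K χ r (q ^ a * J) =
      (∑ t ∈ Finset.range (a+1), (f0 χ r q) ^ t) * sigmaChi K χ r J := by
  haveI F1 : Fintype {d : Ideal (𝓞 K) // d ∣ q ^ a * J} :=
    UniqueFactorizationMonoid.fintypeSubtypeDvd _ (mul_ne_zero (pow_ne_zero a hq.ne_zero) hJ)
  haveI F2 : Fintype {e : Ideal (𝓞 K) // e ∣ J} :=
    UniqueFactorizationMonoid.fintypeSubtypeDvd _ hJ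
  rw [sigmaChi_eq, sigmaChi_eq, tsum_fintype, tsum_fintype]
  rw [← Fintype.sum_bijective _ (divisors_bij hq hJ hqJ a)
      (fun te : Fin (a+1) × {e : Ideal (𝓞 K) // e ∣ J} => (f0 χ r q) ^ (te.1 : ℕ) * f0 χ r te.2.1)
      (fun d => f0 χ r d.1)
      (fun te => by simp only [f0_mul, f0_pow])]
  rw [Fintype.sum_prod_type, ← Fin.sum_univ_eq_sum_range (fun t => (f0 χ r q) ^ t) (a+1),
    Finset.sum_mul]
  exact Finset.sum_congr rfl fun t _ => by rw [Finset.mul_sum]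

lemma sigmaChi_pow {q : Ideal (𝓞 K)} (hq : Prime q) (a : ℕ) :
    sigmaChi K χ r (q ^ a) = ∑ t ∈ Finset.range (a+1), (f0 χ r q) ^ t := by
  have h1 : ¬ q ∣ (1 : Ideal (𝓞 K)) := fun h => hq.not_unit (isUnit_of_dvd_one h)
  have := sigmaChi_mul_pow χ r hq one_ne_zero h1 a
  rw [mul_one] at this
  rw [this, sigmaChi_one, mul_one]

lemma absNorm_prime_ge_two {q : Ideal (𝓞 K)} (hq : Prime q) : 2 ≤ Ideal.absNorm q := by
  have h0 : Ideal.absNorm q ≠ 0 := by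
    rw [Ne, Ideal.absNorm_eq_zero_iff]
    exact fun h => hq.ne_zero (by rw [h, Ideal.zero_eq_bot])
  have h1 : Ideal.absNorm q ≠ 1 := by
    rw [Ne, Ideal.absNorm_eq_one_iff]
    exact fun h => hq.not_unit (Ideal.isUnit_iff.mpr h)
  omega

/-- The set of nonzero prime ideals. -/
abbrev PrimesOf (K : Type*) [Field K] [NumberField K] := {q : Ideal (𝓞 K) // Prime q}

lemma fiber_finite (n : ℕ) :
    Finite {z : PrimesOf K // Ideal.absNorm z.1 = n} := by
  by_cases hn : n = 0
  · subst hn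
    haveI : IsEmpty {z : PrimesOf K // Ideal.absNorm z.1 = 0} := by
      constructor
      rintro ⟨⟨q, hq⟩, h⟩
      have h2 : Ideal.absNorm q = 0 := h
      exact hq.ne_zero (by rw [Ideal.zero_eq_bot, ← Ideal.absNorm_eq_zero_iff, h2])
    infer_instance
  · have hA : Ideal.span {(n : 𝓞 K)} ≠ 0 := by
      rw [Ideal.zero_eq_bot, Ne, Ideal.span_singleton_eq_bot]
      exact_mod_cast hn
    haveI := UniqueFactorizationMonoid.fintypeSubtypeDvd _ hA
    refine Finite.of_injective
      (fun z : {z : PrimesOf K // Ideal.absNorm z.1 = n} =>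
        (⟨z.1.1, ?_⟩ : {d : Ideal (𝓞 K) // d ∣ Ideal.span {(n : 𝓞 K)}})) ?_
    · rw [Ideal.dvd_iff_le, Ideal.span_le, Set.singleton_subset_iff]
      have := Ideal.absNorm_mem z.1.1
      rwa [z.2] at this
    · intro z1 z2 h
      simp only [Subtype.mk.injEq] at h
      exact Subtype.ext (Subtype.ext h)

lemma fiber_card_le (n : ℕ) :
    Nat.card {z : PrimesOf K // Ideal.absNorm z.1 = n} ≤
      Fintype.card (Module.Free.ChooseBasisIndex ℤ (𝓞 K)) := by
  set d := Fintype.card (Module.Free.ChooseBasisIndex ℤ (𝓞 K)) with hd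
  haveI := fiber_finite (K := K) n
  by_cases hn : 2 ≤ n
  · have hA : Ideal.span {(n : 𝓞 K)} ≠ 0 := by
      rw [Ideal.zero_eq_bot, Ne, Ideal.span_singleton_eq_bot]
      exact_mod_cast (by omega : n ≠ 0)
    have hNA : Ideal.absNorm (Ideal.span {(n : 𝓞 K)}) = n ^ d := by
      rw [show ((n : 𝓞 K)) = algebraMap ℤ (𝓞 K) (n : ℤ) from (map_natCast _ n).symm,
        Ideal.absNorm_span_singleton,
        Algebra.norm_algebraMap_of_basis (Module.Free.chooseBasis ℤ (𝓞 K))]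
      simp [Int.natAbs_pow, hd]
    haveI := Fintype.ofFinite {z : PrimesOf K // Ideal.absNorm z.1 = n}
    classical
    set F : Finset (Ideal (𝓞 K)) :=
      Finset.image (fun z : {z : PrimesOf K // Ideal.absNorm z.1 = n} => z.1.1)
        Finset.univ with hF
    have hinj : Function.Injective
        (fun z : {z : PrimesOf K // Ideal.absNorm z.1 = n} => z.1.1) := by
      intro z1 z2 h
      exact Subtype.ext (Subtype.ext h)
    have hcardF : F.card = Nat.card {z : PrimesOf K // Ideal.absNorm z.1 = n} := by
      rw [hF, Finset.card_image_of_injective _ hinj, Finset.card_univ, Nat.card_eq_fintype_card]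
    have hmem : ∀ x ∈ F, Prime x ∧ x ∣ Ideal.span {(n : 𝓞 K)} ∧ Ideal.absNorm x = n := by
      intro x hx
      rw [hF, Finset.mem_image] at hx
      obtain ⟨z, _, rfl⟩ := hx
      refine ⟨z.1.2, ?_, z.2⟩
      rw [Ideal.dvd_iff_le, Ideal.span_le, Set.singleton_subset_iff]
      have := Ideal.absNorm_mem z.1.1
      rwa [z.2] at this
    have hprod : (∏ x ∈ F, x) ∣ Ideal.span {(n : 𝓞 K)} :=
      Finset.prod_primes_dvd _ (fun x hx => (hmem x hx).1) (fun x hx => (hmem x hx).2.1)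
    have hNprod : Ideal.absNorm (∏ x ∈ F, x) = n ^ F.card := by
      have hmp : Ideal.absNorm (∏ x ∈ F, x) = ∏ x ∈ F, Ideal.absNorm x :=
        map_prod Ideal.absNorm (fun x => x) F
      rw [hmp, Finset.prod_congr rfl (fun x hx => (hmem x hx).2.2), Finset.prod_const]
    have hdvd : n ^ F.card ∣ n ^ d := by
      rw [← hNprod, ← hNA]
      exact map_dvd Ideal.absNorm hprod
    have := (Nat.pow_dvd_pow_iff_le_right (by omega : 1 < n)).mp hdvd
    omega
  · -- n = 0 or 1 : the fiber is empty
    have : IsEmpty {z : PrimesOf K // Ideal.absNorm z.1 = n} := by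
      constructor
      rintro ⟨⟨q, hq⟩, h⟩
      have h2 : Ideal.absNorm q = n := h
      have := absNorm_prime_ge_two hq
      omega
    rw [Nat.card_of_isEmpty]
    exact Nat.zero_le _

lemma summable_primes (hr : 1 < r) :
    Summable (fun z : PrimesOf K => (Ideal.absNorm z.1 : ℝ) ^ (-r)) := by
  classical
  set ν : PrimesOf K → ℕ := fun z => Ideal.absNorm z.1 with hν
  rw [← (Equiv.sigmaFiberEquiv ν).summable_iff]
  set d := Fintype.card (Module.Free.ChooseBasisIndex ℤ (𝓞 K)) with hd
  have hfg : ((fun z : PrimesOf K => (Ideal.absNorm z.1 : ℝ) ^ (-r)) ∘ (Equiv.sigmaFiberEquiv ν))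
      = fun x : (Σ n : ℕ, {z : PrimesOf K // ν z = n}) => ((x.1 : ℝ)) ^ (-r) := by
    funext x
    obtain ⟨n, z⟩ := x
    simp only [Function.comp_apply, Equiv.sigmaFiberEquiv_apply]
    have : Ideal.absNorm z.1.1 = n := z.2
    rw [this]
  rw [hfg]
  have hnonneg : ∀ x : (Σ n : ℕ, {z : PrimesOf K // ν z = n}), 0 ≤ ((x.1 : ℝ)) ^ (-r) :=
    fun x => by positivity
  refine (summable_sigma_of_nonneg hnonneg).mpr ⟨fun n => ?_, ?_⟩
  · haveI : Finite {z : PrimesOf K // ν z = n} := fiber_finite (K := K) n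
    exact Summable.of_finite
  · refine Summable.of_nonneg_of_le (fun n => tsum_nonneg fun z => by positivity)
      (fun n => ?_) (((Real.summable_nat_rpow (p := -r)).mpr (by linarith)).mul_left (d : ℝ))
    haveI : Finite {z : PrimesOf K // ν z = n} := fiber_finite (K := K) n
    show (∑' _ : {z : PrimesOf K // ν z = n}, (n:ℝ) ^ (-r)) ≤ (d:ℝ) * (n:ℝ) ^ (-r)
    rw [tsum_const, nsmul_eq_mul]
    have h1 : (0:ℝ) ≤ (n : ℝ) ^ (-r) := by positivity
    have h2 : (Nat.card {z : PrimesOf K // ν z = n} : ℝ) ≤ (d : ℝ) :=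
      Nat.cast_le.mpr (fiber_card_le (K := K) n)
    exact mul_le_mul_of_nonneg_right h2 h1

open Classical in
/-- Indicator of primes dividing `I`, valued `N(q)^{-r}`. -/
noncomputable def ind (r : ℝ) (I : Ideal (𝓞 K)) (z : PrimesOf K) : ℝ :=
  if z.1 ∣ I then (Ideal.absNorm z.1 : ℝ) ^ (-r) else 0

lemma ind_nonneg (r : ℝ) (I : Ideal (𝓞 K)) (z : PrimesOf K) : 0 ≤ ind r I z := by
  rw [ind]; split_ifs <;> positivity

lemma ind_le (r : ℝ) (I : Ideal (𝓞 K)) (z : PrimesOf K) :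
    ind r I z ≤ (Ideal.absNorm z.1 : ℝ) ^ (-r) := by
  rw [ind]; split_ifs with h
  · exact le_refl _
  · positivity

lemma summable_ind (hr : 1 < r) (I : Ideal (𝓞 K)) : Summable (ind (K := K) r I) :=
  Summable.of_nonneg_of_le (ind_nonneg r I) (ind_le r I) (summable_primes r hr)

lemma abs_sigmaChi_le_exp (hχ : ∀ a : ZMod m, χ a = -1 ∨ χ a = 0 ∨ χ a = 1) (hr : 1 < r) :
    ∀ (n : ℕ) (I : Ideal (𝓞 K)), I ≠ 0 → Ideal.absNorm I ≤ n →
      |sigmaChi K χ r I| ≤ Real.exp (2 * ∑' z : PrimesOf K, ind r I z) := by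
  intro n
  induction n with
  | zero =>
    intro I hI0 hIn
    exact absurd (Ideal.absNorm_eq_zero_iff.mp (Nat.le_zero.mp hIn))
      (by rwa [← Ideal.zero_eq_bot])
  | succ n ih =>
    intro I hI0 hIn
    have htnn : 0 ≤ 2 * ∑' z : PrimesOf K, ind r I z :=
      mul_nonneg (by norm_num) (tsum_nonneg (ind_nonneg r I))
    by_cases hu : IsUnit I
    · have hI1 : I = 1 := by rw [Ideal.isUnit_iff.mp hu, Ideal.one_eq_top]
      rw [hI1, sigmaChi_one, abs_one]
      exact Real.one_le_exp (mul_nonneg (by norm_num) (tsum_nonneg (ind_nonneg r 1)))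
    · obtain ⟨q, hqirr, hqdvd⟩ := WfDvdMonoid.exists_irreducible_factor hu hI0
      have hq : Prime q := UniqueFactorizationMonoid.irreducible_iff_prime.mp hqirr
      obtain ⟨a, J, hqJ, rfl⟩ := WfDvdMonoid.max_power_factor hI0 hqirr
      clear htnn hu
      have hJ0 : J ≠ 0 := right_ne_zero_of_mul hI0
      have ha : a ≠ 0 := by
        rintro rfl
        rw [pow_zero, one_mul] at hqdvd
        exact hqJ hqdvd
      clear hqdvd
      -- norm inequalities
      have hNq : 2 ≤ Ideal.absNorm q := absNorm_prime_ge_two hq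
      have hNJ : Ideal.absNorm J ≠ 0 := fun h =>
        hJ0 (by rw [Ideal.zero_eq_bot, ← Ideal.absNorm_eq_zero_iff, h])
      have hNmul : Ideal.absNorm (q ^ a * J) = Ideal.absNorm q ^ a * Ideal.absNorm J := by
        rw [map_mul Ideal.absNorm, map_pow Ideal.absNorm]
      have hNqa : 2 ≤ Ideal.absNorm q ^ a :=
        le_trans (by simpa using Nat.pow_le_pow_right (by norm_num) (Nat.one_le_iff_ne_zero.mpr ha)
          : 2 ≤ 2 ^ a) (Nat.pow_le_pow_left hNq a)
      have hNlt : Ideal.absNorm J < Ideal.absNorm (q ^ a * J) := by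
        rw [hNmul]
        calc Ideal.absNorm J < 2 * Ideal.absNorm J := by omega
          _ ≤ Ideal.absNorm q ^ a * Ideal.absNorm J := Nat.mul_le_mul_right _ hNqa
      have hIH := ih J hJ0 (by omega)
      -- geometric bound
      set y : ℝ := (Ideal.absNorm q : ℝ) ^ (-r) with hy
      have hNq2 : (2:ℝ) ≤ (Ideal.absNorm q : ℝ) := by exact_mod_cast hNq
      have hy0 : 0 < y := Real.rpow_pos_of_pos (by linarith) _
      have hyhalf : y ≤ 1/2 := by
        have h1 : (2:ℝ) ≤ (Ideal.absNorm q : ℝ) ^ r := by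
          calc (2:ℝ) ≤ (Ideal.absNorm q : ℝ) := hNq2
            _ = (Ideal.absNorm q : ℝ) ^ (1:ℝ) := (Real.rpow_one _).symm
            _ ≤ _ := Real.rpow_le_rpow_of_exponent_le (by linarith) hr.le
        rw [hy, Real.rpow_neg (by linarith)]
        calc ((Ideal.absNorm q : ℝ) ^ r)⁻¹ ≤ (2:ℝ)⁻¹ := inv_anti₀ (by norm_num) h1
          _ = 1/2 := by norm_num
      have hy1 : y < 1 := by linarith
      have hgeom : |∑ t ∈ Finset.range (a+1), (f0 χ r q) ^ t| ≤ (1 - y)⁻¹ := by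
        refine le_trans (Finset.abs_sum_le_sum_abs _ _) ?_
        have hstep : ∀ t ∈ Finset.range (a+1), |(f0 χ r q) ^ t| ≤ y ^ t := by
          intro t _
          rw [abs_pow]
          exact pow_le_pow_left₀ (abs_nonneg _) (hy ▸ abs_f0_le χ hχ r q) t
        refine le_trans (Finset.sum_le_sum hstep) ?_
        have := Summable.sum_le_tsum (Finset.range (a+1)) (fun t _ => by positivity)
          (summable_geometric_of_lt_one hy0.le hy1)
        rwa [tsum_geometric_of_lt_one hy0.le hy1] at this
      have h1y : 0 < 1 - y := by linarith
      have hexp : (1 - y)⁻¹ ≤ Real.exp (2*y) := by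
        have h2y : 2*y + 1 ≤ Real.exp (2*y) := Real.add_one_le_exp _
        rw [inv_eq_one_div, div_le_iff₀ h1y]
        nlinarith
      -- tsum comparison
      set zq : PrimesOf K := ⟨q, hq⟩ with hzq
      classical
      have hspike : Summable (fun z : PrimesOf K => if z = zq then y else 0) :=
        (hasSum_ite_eq zq y).summable
      have hsumJ : Summable (ind (K := K) r J) := summable_ind r hr J
      have hsumI : Summable (ind (K := K) r (q ^ a * J)) := summable_ind r hr _
      have hptwise : ∀ z : PrimesOf K,
          ind r J z + (if z = zq then y else 0) ≤ ind r (q ^ a * J) z := by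
        intro z
        by_cases hz : z = zq
        · subst hz
          have hnd : ¬ (zq.1 ∣ J) := hqJ
          have hd2 : zq.1 ∣ q ^ a * J := dvd_mul_of_dvd_left (dvd_pow_self q ha) J
          rw [ind, ind, if_neg hnd, if_pos hd2, if_pos rfl, zero_add]
        · rw [ind, ind, if_neg hz, add_zero]
          split_ifs with h1 h2
          · exact le_refl _
          · exact absurd (h1.mul_left _) h2
          · positivity
          · exact le_refl _
      have htsum : (∑' z : PrimesOf K, ind r J z) + y ≤
          ∑' z : PrimesOf K, ind r (q ^ a * J) z := by
        have h := Summable.tsum_le_tsum hptwise (hsumJ.add hspike) hsumI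
        rwa [Summable.tsum_add hsumJ hspike, tsum_ite_eq] at h
      -- combine
      rw [sigmaChi_mul_pow χ r hq hJ0 hqJ a, abs_mul]
      calc |∑ t ∈ Finset.range (a+1), (f0 χ r q) ^ t| * |sigmaChi K χ r J|
          ≤ (1 - y)⁻¹ * Real.exp (2 * ∑' z : PrimesOf K, ind r J z) := by
            exact mul_le_mul hgeom hIH (abs_nonneg _) (by positivity)
        _ ≤ Real.exp (2*y) * Real.exp (2 * ∑' z : PrimesOf K, ind r J z) :=
            mul_le_mul_of_nonneg_right hexp (Real.exp_nonneg _)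
        _ = Real.exp (2*y + 2 * ∑' z : PrimesOf K, ind r J z) := (Real.exp_add _ _).symm
        _ ≤ Real.exp (2 * ∑' z : PrimesOf K, ind r (q ^ a * J) z) := by
            rw [Real.exp_le_exp]
            nlinarith [htsum]

lemma abs_sigmaChi_le (hχ : ∀ a : ZMod m, χ a = -1 ∨ χ a = 0 ∨ χ a = 1) (hr : 1 < r)
    (I : Ideal (𝓞 K)) (hI : I ≠ 0) :
    |sigmaChi K χ r I| ≤
      Real.exp (2 * ∑' z : PrimesOf K, (Ideal.absNorm z.1 : ℝ) ^ (-r)) := by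
  refine (abs_sigmaChi_le_exp χ r hχ hr (Ideal.absNorm I) I hI le_rfl).trans ?_
  rw [Real.exp_le_exp]
  have := Summable.tsum_le_tsum (ind_le (K := K) r I) (summable_ind r hr I) (summable_primes r hr)
  linarith

end Stmt7Aux

/-- With `𝒩_Q` the set of nonzero ideals not divisible by any prime in `Q`, the closure of
`σ_{r,K,χ}(𝒩_P)` equals the union, over `a ∈ ℤ_{≥0} ∪ {∞}`, of
`σ_{r,K,χ}(𝔭^a) · closure (σ_{r,K,χ}(𝒩_{P ∪ {𝔭}}))`. -/
theorem stmt7 (r : ℝ) (hr : 1 < r) (K : Type*) [Field K] [NumberField K]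
    (m : ℕ) (hm : 0 < m) (χ : DirichletCharacter ℝ m)
    (hχ : ∀ a : ZMod m, χ a = -1 ∨ χ a = 0 ∨ χ a = 1)
    (P : Finset (Ideal (𝓞 K))) (hP : ∀ q ∈ P, q.IsPrime ∧ q ≠ ⊥)
    (p : Ideal (𝓞 K)) (hp : p.IsPrime) (hp0 : p ≠ ⊥) (hpP : p ∉ P) :
    closure (sigmaChi K χ r '' {I : Ideal (𝓞 K) | I ≠ 0 ∧ ∀ q ∈ P, ¬ q ∣ I}) =
      (⋃ a : ℕ, sigmaChi K χ r (p ^ a) •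
        closure (sigmaChi K χ r ''
          {I : Ideal (𝓞 K) | I ≠ 0 ∧ ∀ q, (q = p ∨ q ∈ P) → ¬ q ∣ I})) ∪
      sigmaChiInf K χ r p •
        closure (sigmaChi K χ r ''
          {I : Ideal (𝓞 K) | I ≠ 0 ∧ ∀ q, (q = p ∨ q ∈ P) → ¬ q ∣ I}) := by
  classical
  have hpp : Prime p := Ideal.prime_of_isPrime hp0 hp
  set A : Set (Ideal (𝓞 K)) := {I : Ideal (𝓞 K) | I ≠ 0 ∧ ∀ q ∈ P, ¬ q ∣ I} with hA
  set B : Set (Ideal (𝓞 K)) := {I : Ideal (𝓞 K) | I ≠ 0 ∧ ∀ q, (q = p ∨ q ∈ P) → ¬ q ∣ I}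
    with hB
  set S : Set ℝ := sigmaChi K χ r '' B with hS
  set x : ℝ := Stmt7Aux.f0 χ r p with hx
  set g : ℕ → ℝ := fun a => ∑ t ∈ Finset.range (a+1), x ^ t with hg
  have hgp : ∀ a, sigmaChi K χ r (p ^ a) = g a := fun a => Stmt7Aux.sigmaChi_pow χ r hpp a
  -- |x| < 1
  have hNp2 : (2:ℝ) ≤ (Ideal.absNorm p : ℝ) := by
    exact_mod_cast Stmt7Aux.absNorm_prime_ge_two hpp
  have hylt : (Ideal.absNorm p : ℝ) ^ (-r) < 1 :=
    Real.rpow_lt_one_of_one_lt_of_neg (by linarith) (by linarith)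
  have hx1 : |x| < 1 := lt_of_le_of_lt (Stmt7Aux.abs_f0_le χ hχ r p) hylt
  -- the limit point
  have hcinf : sigmaChiInf K χ r p = (1 - x)⁻¹ := rfl
  have hsum : HasSum (fun t : ℕ => x ^ t) (1 - x)⁻¹ :=
    hasSum_geometric_of_norm_lt_one (by rwa [Real.norm_eq_abs])
  have htend : Filter.Tendsto g Filter.atTop (nhds ((1 - x)⁻¹)) := by
    have h1 := hsum.tendsto_sum_nat
    exact h1.comp (Filter.tendsto_add_atTop_nat 1)
  -- closure S is compact
  have hSsub : S ⊆ Metric.closedBall 0 (Real.exp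
      (2 * ∑' z : Stmt7Aux.PrimesOf K, (Ideal.absNorm z.1 : ℝ) ^ (-r))) := by
    rintro s ⟨I, hI, rfl⟩
    rw [Metric.mem_closedBall, Real.dist_eq, sub_zero]
    exact Stmt7Aux.abs_sigmaChi_le χ r hχ hr I hI.1
  have hFcompact : IsCompact (closure S) :=
    Metric.isCompact_of_isClosed_isBounded isClosed_closure
      ((Metric.isBounded_closedBall.subset hSsub).closure)
  -- decomposition of the image
  have hTeq : sigmaChi K χ r '' A = ⋃ a : ℕ, g a • S := by
    ext z
    constructor
    · rintro ⟨I, ⟨hI0, hIP⟩, rfl⟩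
      obtain ⟨a, J, hpJ, rfl⟩ := WfDvdMonoid.max_power_factor hI0 hpp.irreducible
      have hJ0 : J ≠ 0 := right_ne_zero_of_mul hI0
      refine Set.mem_iUnion.mpr ⟨a, ?_⟩
      rw [Set.mem_smul_set]
      refine ⟨sigmaChi K χ r J, ⟨J, ⟨hJ0, ?_⟩, rfl⟩, ?_⟩
      · intro q hq
        rcases hq with rfl | hqP
        · exact hpJ
        · exact fun hdvd => hIP q hqP (hdvd.mul_left _)
      · rw [smul_eq_mul, ← Stmt7Aux.sigmaChi_mul_pow χ r hpp hJ0 hpJ a]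
    · intro hz
      obtain ⟨a, hz⟩ := Set.mem_iUnion.mp hz
      obtain ⟨y, ⟨J, ⟨hJ0, hJB⟩, rfl⟩, rfl⟩ := hz
      refine ⟨p ^ a * J, ⟨mul_ne_zero (pow_ne_zero a hpp.ne_zero) hJ0, ?_⟩, ?_⟩
      · intro q hqP hdvd
        have hqpr : Prime q := Ideal.prime_of_isPrime (hP q hqP).2 (hP q hqP).1
        rcases hqpr.2.2 _ _ hdvd with h | h
        · obtain ⟨c, hc⟩ := hqpr.dvd_of_dvd_pow h
          rcases hpp.irreducible.isUnit_or_isUnit hc with hu | hu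
          · exact hqpr.not_unit hu
          · have hc1 : c = 1 := by rw [Ideal.one_eq_top]; exact Ideal.isUnit_iff.mp hu
            rw [hc1, mul_one] at hc
            exact hpP (hc ▸ hqP)
        · exact hJB q (Or.inr hqP) h
      · rw [Stmt7Aux.sigmaChi_mul_pow χ r hpp hJ0 (hJB p (Or.inl rfl))]
        show (∑ t ∈ Finset.range (a+1), x ^ t) * sigmaChi K χ r J = g a • sigmaChi K χ r J
        rw [smul_eq_mul]
  -- rewrite the goal
  simp only [hgp, hcinf]
  -- each g a • closure S is inside the closure
  have hsub1 : ∀ a : ℕ, g a • closure S ⊆ closure (sigmaChi K χ r '' A) := by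
    intro a
    have h1 : (fun y : ℝ => g a • y) '' closure S ⊆ closure ((fun y : ℝ => g a • y) '' S) :=
      image_closure_subset_closure_image (continuous_const_smul (g a))
    rw [Set.image_smul, Set.image_smul] at h1
    refine h1.trans (closure_mono ?_)
    rw [hTeq]
    exact Set.subset_iUnion (fun a : ℕ => g a • S) a
  have hsub2 : (1 - x)⁻¹ • closure S ⊆ closure (sigmaChi K χ r '' A) := by
    rintro z ⟨y, hy, rfl⟩
    have hmem : ∀ a : ℕ, g a • y ∈ closure (sigmaChi K χ r '' A) :=
      fun a => hsub1 a (Set.smul_mem_smul_set hy)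
    have hten : Filter.Tendsto (fun a : ℕ => g a • y) Filter.atTop (nhds ((1 - x)⁻¹ • y)) := by
      simp only [smul_eq_mul]
      exact htend.mul_const y
    exact isClosed_closure.mem_of_tendsto hten (Filter.Eventually.of_forall hmem)
  refine subset_antisymm ?_ ?_
  · -- closure ⊆ union
    set C : Set ℝ := insert ((1 - x)⁻¹) (Set.range g) with hC
    have hCcomp : IsCompact C := htend.isCompact_insert_range
    have hRHSeq : (⋃ a : ℕ, g a • closure S) ∪ (1 - x)⁻¹ • closure S = C • closure S := by
      ext z
      simp only [Set.mem_union, Set.mem_iUnion, Set.mem_smul_set, Set.mem_smul, hC,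
        Set.mem_insert_iff, Set.mem_range]
      constructor
      · rintro (⟨a, y, hy, rfl⟩ | ⟨y, hy, rfl⟩)
        · exact ⟨g a, Or.inr ⟨a, rfl⟩, y, hy, rfl⟩
        · exact ⟨(1 - x)⁻¹, Or.inl rfl, y, hy, rfl⟩
      · rintro ⟨c, hc, y, hy, rfl⟩
        rcases hc with rfl | ⟨a, rfl⟩
        · exact Or.inr ⟨y, hy, rfl⟩
        · exact Or.inl ⟨a, y, hy, rfl⟩
    rw [hRHSeq]
    have hclosed : IsClosed (C • closure S) := by
      have himg : C • closure S = (fun zz : ℝ × ℝ => zz.1 • zz.2) '' (C ×ˢ closure S) := by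
        rw [← Set.image2_smul, ← Set.image_prod]
      rw [himg]
      exact ((hCcomp.prod hFcompact).image (continuous_fst.smul continuous_snd)).isClosed
    refine closure_minimal ?_ hclosed
    rw [hTeq, ← hRHSeq]
    refine Set.iUnion_subset fun a => ?_
    refine Set.Subset.trans ?_ (Set.subset_union_left.trans (le_refl _))
    exact (Set.smul_set_mono subset_closure).trans
      (Set.subset_iUnion (fun a : ℕ => g a • closure S) a)
  · -- union ⊆ closure
    exact Set.union_subset (Set.iUnion_subset hsub1) hsub2
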